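/- Empirical-to-population norm concentration (bounded case): Suppose ‖f‖_∞ ≤ B_F for all f ∈ F, and suppose f, g ∈ F satisfy n‖f − g‖²_{L2(P_X)} ≥ C²δ² for some sufficiently large C > 0, and n‖f − f̄‖²_{L2(P_X)} < δ². Then, with probability at least 1 − exp(−3δ²/(64 B_F²)) − exp(−3δ²/(16 B_F² (3C² + 1))), both n‖f − f̄‖²_{L2(P_n)} ≤ 2δ² and n‖f − g‖²_{L2(P_n)} ≥ (C² − 1)δ² hold simultaneously. -/

import Mathlib

open MeasureTheory ProbabilityTheory ENNReal

lemma exp_neg_le_quad {s : ℝ} (hs : 0 ≤ s) : Real.exp (-s) ≤ 1 - s + s ^ 2 := by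
  have h1 : 1 + s ≤ Real.exp s := by linarith [Real.add_one_le_exp s]
  have hpos : (0:ℝ) < 1 + s := by linarith
  have h2 : (Real.exp s)⁻¹ ≤ (1 + s)⁻¹ := by
    apply inv_anti₀ hpos h1
  rw [Real.exp_neg]
  refine h2.trans ?_
  rw [inv_le_iff_one_le_mul₀ hpos]
  nlinarith

noncomputable section

/-- The `L2(P_X)` distance between two functions. -/
def dist2 {X : Type*} [MeasurableSpace X] (μ : Measure X) (f g : X → ℝ) : ℝ :=
  Real.sqrt (∫ x, (f x - g x) ^ 2 ∂μ)

/-- Largest cardinality of an `r`-packing of `S` in the `L2(μ)` norm. -/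
def packNum {X : Type*} [MeasurableSpace X] (μ : Measure X) (r : ℝ)
    (S : Set (X → ℝ)) : ℝ≥0∞ :=
  ⨆ (T : Finset (X → ℝ)) (_ : ↑T ⊆ S ∧
      ∀ f ∈ T, ∀ g ∈ T, f ≠ g → r < dist2 μ f g), (T.card : ℝ≥0∞)

/-- Local packing number `M^loc_F(ε, c)`. -/
def Mloc {X : Type*} [MeasurableSpace X] (μ : Measure X) (F : Set (X → ℝ))
    (ε c : ℝ) : ℝ≥0∞ :=
  ⨆ f ∈ F, packNum μ (ε / c) ({g | dist2 μ f g ≤ ε} ∩ F)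

/-- Joint law of the data `((X_1,…,X_n),(Y_1,…,Y_n))` where the `X_i` are i.i.d. `μ` and
`Y_i = f(X_i) + ξ_i` with `ξ_i` i.i.d. `N(0,σ²)` independent of the `X_i`. -/
def jointLaw {X : Type*} [MeasurableSpace X] (μ : Measure X) [IsProbabilityMeasure μ]
    (σ : ℝ) (n : ℕ) (f : X → ℝ) : Measure ((Fin n → X) × (Fin n → ℝ)) :=
  ((Measure.pi fun _ : Fin n => μ).prod
      (Measure.pi fun _ : Fin n => gaussianReal 0 ⟨σ ^ 2, sq_nonneg σ⟩)).map
    fun p => (p.1, fun i => f (p.1 i) + p.2 i)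

/-- Minimax risk over `F` for the squared `L2(μ)` loss. -/
def minimaxRisk {X : Type*} [MeasurableSpace X] (μ : Measure X) [IsProbabilityMeasure μ]
    (σ : ℝ) (n : ℕ) (F : Set (X → ℝ)) : ℝ≥0∞ :=
  ⨅ (fhat : (Fin n → X) × (Fin n → ℝ) → X → ℝ)
    (_ : Measurable fhat ∧ ∀ dat, fhat dat ∈ F),
    ⨆ f ∈ F, ∫⁻ dat, ENNReal.ofReal ((dist2 μ (fhat dat) f) ^ 2) ∂(jointLaw μ σ n f)


/-- Empirical `L2(P_n)` distance between two functions, given design points `x`. -/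
def empDist2 {X : Type*} {n : ℕ} (x : Fin n → X) (f g : X → ℝ) : ℝ :=
  Real.sqrt ((1 / (n : ℝ)) * ∑ i, (f (x i) - g (x i)) ^ 2)

lemma mgf_bound {X : Type*} [MeasurableSpace X] (μ : Measure X) [IsProbabilityMeasure μ]
    (Z : X → ℝ) (hZm : Measurable Z) (M : ℝ) (hM : 0 < M)
    (hZ0 : ∀ x, 0 ≤ Z x) (hZM : ∀ x, Z x ≤ M) (u : ℝ) :
    ∫ x, Real.exp (u * Z x) ∂μ ≤ Real.exp ((Real.exp (u * M) - 1) * (∫ x, Z x ∂μ) / M) := by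
  have hZint : Integrable Z μ := by
    refine Integrable.mono' (integrable_const M) hZm.aestronglyMeasurable ?_
    exact Filter.Eventually.of_forall fun x => by
      rw [Real.norm_eq_abs, abs_of_nonneg (hZ0 x)]; exact hZM x
  have hpt : ∀ x, Real.exp (u * Z x) ≤ 1 + (Real.exp (u * M) - 1) / M * Z x := by
    intro x
    have hθ0 : 0 ≤ Z x / M := div_nonneg (hZ0 x) hM.le
    have hθ1 : Z x / M ≤ 1 := (div_le_one hM).2 (hZM x)
    have hc := convexOn_exp.2 (Set.mem_univ (0:ℝ)) (Set.mem_univ (u * M))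
      (by linarith : (0:ℝ) ≤ 1 - Z x / M) hθ0 (by ring)
    simp only [smul_eq_mul, mul_zero, zero_add, Real.exp_zero] at hc
    have he : Z x / M * (u * M) = u * Z x := by field_simp
    rw [he] at hc
    calc Real.exp (u * Z x) ≤ (1 - Z x / M) * 1 + Z x / M * Real.exp (u * M) := hc
      _ = 1 + (Real.exp (u * M) - 1) / M * Z x := by field_simp; ring
  have hint1 : Integrable (fun x => Real.exp (u * Z x)) μ := by
    refine Integrable.mono' (integrable_const (Real.exp (|u| * M)))
      ((hZm.const_mul u).exp).aestronglyMeasurable ?_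
    refine Filter.Eventually.of_forall fun x => ?_
    rw [Real.norm_eq_abs, abs_of_pos (Real.exp_pos _)]
    apply Real.exp_le_exp.2
    calc u * Z x ≤ |u * Z x| := le_abs_self _
      _ = |u| * |Z x| := abs_mul _ _
      _ ≤ |u| * M := by
          apply mul_le_mul_of_nonneg_left _ (abs_nonneg u)
          rw [abs_of_nonneg (hZ0 x)]; exact hZM x
  have hint2 : Integrable (fun x => 1 + (Real.exp (u * M) - 1) / M * Z x) μ :=
    (integrable_const 1).add (hZint.const_mul _)
  have h1 : ∫ x, Real.exp (u * Z x) ∂μ ≤ ∫ x, (1 + (Real.exp (u * M) - 1) / M * Z x) ∂μ :=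
    integral_mono hint1 hint2 hpt
  have h2 : ∫ x, (1 + (Real.exp (u * M) - 1) / M * Z x) ∂μ
      = 1 + (Real.exp (u * M) - 1) * (∫ x, Z x ∂μ) / M := by
    rw [integral_add (integrable_const 1) (hZint.const_mul _), integral_const,
      integral_const_mul]
    simp [measure_univ]
    ring
  refine h1.trans ?_
  rw [h2]
  have := Real.add_one_le_exp ((Real.exp (u * M) - 1) * (∫ x, Z x ∂μ) / M)
  linarith

lemma chernoff_pi {X : Type*} [MeasurableSpace X] (μ : Measure X) [IsProbabilityMeasure μ]
    (n : ℕ) (Z : X → ℝ) (hZm : Measurable Z) (M : ℝ) (hM : 0 < M)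
    (hZ0 : ∀ x, 0 ≤ Z x) (hZM : ∀ x, Z x ≤ M) (u a : ℝ) :
    (Measure.pi fun _ : Fin n => μ) {x | a ≤ u * ∑ i, Z (x i)}
      ≤ ENNReal.ofReal (Real.exp (-a + n * ((Real.exp (u * M) - 1) * (∫ x, Z x ∂μ) / M))) := by
  letI : MeasureSpace X := ⟨μ⟩
  haveI : SigmaFinite (volume : Measure X) := inferInstanceAs (SigmaFinite μ)
  haveI hprob : IsProbabilityMeasure (Measure.pi fun _ : Fin n => μ) := by infer_instance
  set ν := Measure.pi fun _ : Fin n => μ with hν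
  set G : (Fin n → X) → ℝ := fun x => Real.exp (u * ∑ i, Z (x i)) with hG
  have hGm : Measurable G :=
    ((Finset.measurable_sum Finset.univ fun i _ =>
      hZm.comp (measurable_pi_apply i)).const_mul u).exp
  have hGbd : ∀ x, G x ≤ Real.exp (|u| * (n * M)) := by
    intro x
    apply Real.exp_le_exp.2
    have hsum0 : 0 ≤ ∑ i, Z (x i) := Finset.sum_nonneg fun i _ => hZ0 (x i)
    have hsumM : ∑ i, Z (x i) ≤ n * M := by
      calc ∑ i, Z (x i) ≤ ∑ _i : Fin n, M := Finset.sum_le_sum fun i _ => hZM (x i)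
        _ = n * M := by simp [Finset.sum_const, nsmul_eq_mul]
    calc u * ∑ i, Z (x i) ≤ |u * ∑ i, Z (x i)| := le_abs_self _
      _ = |u| * |∑ i, Z (x i)| := abs_mul _ _
      _ ≤ |u| * (n * M) := by
          apply mul_le_mul_of_nonneg_left _ (abs_nonneg u)
          rw [abs_of_nonneg hsum0]; exact hsumM
  have hGint : Integrable G ν := by
    refine Integrable.mono' (integrable_const (Real.exp (|u| * (n * M))))
      hGm.aestronglyMeasurable ?_
    exact Filter.Eventually.of_forall fun x => by
      rw [Real.norm_eq_abs, abs_of_pos (Real.exp_pos _)]; exact hGbd x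
  have hmarkov := mul_meas_ge_le_integral_of_nonneg
    (μ := ν) (Filter.Eventually.of_forall fun x => (Real.exp_pos (u * ∑ i, Z (x i))).le)
    hGint (Real.exp a)
  have hGprod : ∫ x, G x ∂ν = (∫ x, Real.exp (u * Z x) ∂μ) ^ n := by
    have : ∀ x : Fin n → X, G x = ∏ i, Real.exp (u * Z (x i)) := by
      intro x
      rw [hG]
      simp only [Finset.mul_sum, Real.exp_sum]
    simp_rw [this]
    have := MeasureTheory.integral_fintype_prod_eq_pow (𝕜 := ℝ) (ι := Fin n) (μ := μ)
      (fun y => Real.exp (u * Z y))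
    simpa [Fintype.card_fin] using this
  have hmgf := mgf_bound μ Z hZm M hM hZ0 hZM u
  have hpow : (∫ x, Real.exp (u * Z x) ∂μ) ^ n
      ≤ Real.exp (n * ((Real.exp (u * M) - 1) * (∫ x, Z x ∂μ) / M)) := by
    calc (∫ x, Real.exp (u * Z x) ∂μ) ^ n
        ≤ (Real.exp ((Real.exp (u * M) - 1) * (∫ x, Z x ∂μ) / M)) ^ n :=
          pow_le_pow_left₀ (integral_nonneg fun x => (Real.exp_pos _).le) hmgf n
      _ = Real.exp (n * ((Real.exp (u * M) - 1) * (∫ x, Z x ∂μ) / M)) := by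
          rw [← Real.exp_nat_mul]
  have hsub : {x : Fin n → X | a ≤ u * ∑ i, Z (x i)} ⊆ {x | Real.exp a ≤ G x} := by
    intro x hx
    exact Real.exp_le_exp.2 hx
  have hfin : ν {x | Real.exp a ≤ G x} ≠ ⊤ := measure_ne_top _ _
  have htoReal : (ν {x | Real.exp a ≤ G x}).toReal
      ≤ Real.exp (-a + n * ((Real.exp (u * M) - 1) * (∫ x, Z x ∂μ) / M)) := by
    have hea : (0:ℝ) < Real.exp a := Real.exp_pos a
    have h1 : (ν {x | Real.exp a ≤ G x}).toReal ≤ (∫ x, G x ∂ν) / Real.exp a := by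
      rw [le_div_iff₀ hea]
      rw [measureReal_def] at hmarkov
      linarith [hmarkov]
    refine h1.trans ?_
    rw [div_le_iff₀ hea, ← Real.exp_add]
    have : -a + n * ((Real.exp (u * M) - 1) * (∫ x, Z x ∂μ) / M) + a
        = n * ((Real.exp (u * M) - 1) * (∫ x, Z x ∂μ) / M) := by ring
    rw [this, hGprod]
    exact hpow
  calc ν {x | a ≤ u * ∑ i, Z (x i)} ≤ ν {x | Real.exp a ≤ G x} := measure_mono hsub
    _ = ENNReal.ofReal ((ν {x | Real.exp a ≤ G x}).toReal) := (ENNReal.ofReal_toReal hfin).symm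
    _ ≤ _ := ENNReal.ofReal_le_ofReal htoReal

set_option maxHeartbeats 1000000 in
/-- **Empirical-to-population norm concentration, bounded case** (Lemma 2.4).  If all functions
in `F` are bounded by `B` in sup-norm, `n‖f − g‖²_{L2(P_X)} ≥ C²δ²` for a sufficiently large
`C > 0`, and `n‖f − f̄‖²_{L2(P_X)} < δ²`, then with probability at least
`1 − exp(−3δ²/(64B²)) − exp(−3δ²/(16B²(3C²+1)))` (over the i.i.d. design `X_1,…,X_n ~ μ`) both
`n‖f − f̄‖²_{L2(P_n)} ≤ 2δ²` and `n‖f − g‖²_{L2(P_n)} ≥ (C² − 1)δ²` hold simultaneously. -/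
theorem empirical_concentration_bounded
    {X : Type*} [MeasurableSpace X] (μ : Measure X) [IsProbabilityMeasure μ] (n : ℕ)
    (F : Set (X → ℝ)) (hFconv : Convex ℝ F) (hFmeas : ∀ f ∈ F, Measurable f)
    (B : ℝ) (hB : 0 < B) (hbd : ∀ f ∈ F, ∀ x, |f x| ≤ B) :
    ∃ C₀ : ℝ, 0 < C₀ ∧ ∀ C : ℝ, C₀ ≤ C → ∀ δ : ℝ, 0 < δ →
      ∀ f ∈ F, ∀ g ∈ F, ∀ fbar ∈ F,
      C ^ 2 * δ ^ 2 ≤ (n : ℝ) * (dist2 μ f g) ^ 2 →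
      (n : ℝ) * (dist2 μ f fbar) ^ 2 < δ ^ 2 →
      ENNReal.ofReal (1 - Real.exp (-(3 * δ ^ 2) / (64 * B ^ 2))
            - Real.exp (-(3 * δ ^ 2) / (16 * B ^ 2 * (3 * C ^ 2 + 1))))
        ≤ (Measure.pi fun _ : Fin n => μ)
            {x | (n : ℝ) * (empDist2 x f fbar) ^ 2 ≤ 2 * δ ^ 2 ∧
                 (C ^ 2 - 1) * δ ^ 2 ≤ (n : ℝ) * (empDist2 x f g) ^ 2} := by
  refine ⟨1, one_pos, ?_⟩
  intro C hC δ hδ f hf g hg fbar hfbar hfar hnear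
  have hfm := hFmeas f hf
  have hgm := hFmeas g hg
  have hfbm := hFmeas fbar hfbar
  have hδ2 : (0:ℝ) < δ ^ 2 := by positivity
  have hB2 : (0:ℝ) < B ^ 2 := by positivity
  have hC2 : (1:ℝ) ≤ C ^ 2 := by nlinarith
  have hC2pos : (0:ℝ) < C ^ 2 := by linarith
  set M : ℝ := 4 * B ^ 2 with hMdef
  have hM : 0 < M := by positivity
  have hd2 : ∀ p q : X → ℝ, dist2 μ p q ^ 2 = ∫ x, (p x - q x) ^ 2 ∂μ := fun p q =>
    Real.sq_sqrt (integral_nonneg fun x => sq_nonneg _)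
  rw [hd2] at hfar hnear
  -- n ≠ 0
  rcases Nat.eq_zero_or_pos n with hn0 | hnpos
  · exfalso
    subst hn0
    norm_num at hfar
    nlinarith
  have hn : (n:ℝ) ≠ 0 := Nat.cast_ne_zero.2 hnpos.ne'
  have hemp : ∀ (p q : X → ℝ) (x : Fin n → X),
      (n:ℝ) * (empDist2 x p q) ^ 2 = ∑ i, (p (x i) - q (x i)) ^ 2 := by
    intro p q x
    unfold empDist2
    rw [Real.sq_sqrt (by positivity)]
    field_simp
  -- bounds for squared differences
  have hsqbd : ∀ p ∈ F, ∀ q ∈ F, ∀ x : X, (p x - q x) ^ 2 ≤ M := by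
    intro p hp q hq x
    have h1 := abs_le.1 (hbd p hp x)
    have h2 := abs_le.1 (hbd q hq x)
    rw [hMdef]
    nlinarith [h1.1, h1.2, h2.1, h2.2]
  have hm0 : (0:ℝ) ≤ ∫ x, (f x - fbar x) ^ 2 ∂μ := integral_nonneg fun x => sq_nonneg _
  have hm'0 : (0:ℝ) ≤ ∫ x, (f x - g x) ^ 2 ∂μ := integral_nonneg fun x => sq_nonneg _
  -- parameters
  set t : ℝ := Real.log 2 / M with htdef
  have hlog2 : (0.6931471803:ℝ) < Real.log 2 := Real.log_two_gt_d9
  have ht0 : 0 < t := div_pos (by linarith) hM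
  set s : ℝ := 1 / (2 * C ^ 2) with hsdef
  have hs0 : 0 < s := by positivity
  have hsC : s * C ^ 2 = 1 / 2 := by rw [hsdef]; field_simp
  have hs1 : s ≤ 1 := by rw [hsdef, div_le_one (by positivity)]; linarith
  -- events
  set A : Set (Fin n → X) := {x | t * (2 * δ ^ 2) ≤ t * ∑ i, (f (x i) - fbar (x i)) ^ 2}
    with hAdef
  set Bev : Set (Fin n → X) :=
    {x | -(s / M) * ((C ^ 2 - 1) * δ ^ 2) ≤ -(s / M) * ∑ i, (f (x i) - g (x i)) ^ 2}
    with hBdef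
  have hAm : MeasurableSet A := by
    apply measurableSet_le measurable_const
    exact (Finset.measurable_sum Finset.univ fun i _ =>
      ((hfm.sub hfbm).comp (measurable_pi_apply i)).pow_const 2).const_mul t
  have hBm : MeasurableSet Bev := by
    apply measurableSet_le measurable_const
    exact (Finset.measurable_sum Finset.univ fun i _ =>
      ((hfm.sub hgm).comp (measurable_pi_apply i)).pow_const 2).const_mul (-(s / M))
  -- Chernoff bound for A
  have hAbound : (Measure.pi fun _ : Fin n => μ) A
      ≤ ENNReal.ofReal (Real.exp (-(3 * δ ^ 2) / (64 * B ^ 2))) := by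
    have hch := chernoff_pi μ n (fun x => (f x - fbar x) ^ 2)
      ((hfm.sub hfbm).pow_const 2) M hM (fun x => sq_nonneg _)
      (fun x => hsqbd f hf fbar hfbar x) t (t * (2 * δ ^ 2))
    refine le_trans hch (ENNReal.ofReal_le_ofReal (Real.exp_le_exp.2 ?_))
    have htM : t * M = Real.log 2 := by rw [htdef]; field_simp
    rw [htM, Real.exp_log two_pos]
    have hLHS : -(t * (2 * δ ^ 2))
          + (n:ℝ) * ((2 - 1) * (∫ x, (f x - fbar x) ^ 2 ∂μ) / M)
        = (-(Real.log 2 * (2 * δ ^ 2)) + (n:ℝ) * ∫ x, (f x - fbar x) ^ 2 ∂μ) / M := by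
      rw [htdef]
      field_simp
      ring
    rw [hLHS, hMdef]
    rw [div_le_div_iff₀ (by positivity) (by positivity)]
    nlinarith [hnear, hlog2, mul_pos hδ2 hB2, hm0, Nat.cast_nonneg (α := ℝ) n,
      mul_lt_mul_of_pos_right hnear hB2]
  -- Chernoff bound for Bev
  have hBbound : (Measure.pi fun _ : Fin n => μ) Bev
      ≤ ENNReal.ofReal (Real.exp (-(3 * δ ^ 2) / (16 * B ^ 2 * (3 * C ^ 2 + 1)))) := by
    have hch := chernoff_pi μ n (fun x => (f x - g x) ^ 2)
      ((hfm.sub hgm).pow_const 2) M hM (fun x => sq_nonneg _)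
      (fun x => hsqbd f hf g hg x) (-(s / M)) (-(s / M) * ((C ^ 2 - 1) * δ ^ 2))
    refine le_trans hch (ENNReal.ofReal_le_ofReal (Real.exp_le_exp.2 ?_))
    have hsM : -(s / M) * M = -s := by field_simp
    rw [hsM]
    have hq : Real.exp (-s) ≤ 1 - s + s ^ 2 := exp_neg_le_quad hs0.le
    have hss : s ^ 2 - s ≤ 0 := by nlinarith
    have h1 : (Real.exp (-s) - 1) * (∫ x, (f x - g x) ^ 2 ∂μ)
        ≤ (s ^ 2 - s) * (∫ x, (f x - g x) ^ 2 ∂μ) :=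
      mul_le_mul_of_nonneg_right (by linarith) hm'0
    have h2 : (n:ℝ) * ((Real.exp (-s) - 1) * (∫ x, (f x - g x) ^ 2 ∂μ))
        ≤ (s ^ 2 - s) * ((n:ℝ) * ∫ x, (f x - g x) ^ 2 ∂μ) := by
      have := mul_le_mul_of_nonneg_left h1 (Nat.cast_nonneg (α := ℝ) n)
      linarith [this]
    have h3 : (s ^ 2 - s) * ((n:ℝ) * ∫ x, (f x - g x) ^ 2 ∂μ)
        ≤ (s ^ 2 - s) * (C ^ 2 * δ ^ 2) :=
      mul_le_mul_of_nonpos_left hfar hss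
    have hnum : s * ((C ^ 2 - 1) * δ ^ 2)
          + (n:ℝ) * ((Real.exp (-s) - 1) * (∫ x, (f x - g x) ^ 2 ∂μ))
        ≤ -(δ ^ 2 * s) / 2 := by
      have hkey : s * ((C ^ 2 - 1) * δ ^ 2) + (s ^ 2 - s) * (C ^ 2 * δ ^ 2)
          = δ ^ 2 * (s * C ^ 2 - 1) * s := by ring
      have heq : s * ((C ^ 2 - 1) * δ ^ 2) + (s ^ 2 - s) * (C ^ 2 * δ ^ 2)
          = -(δ ^ 2 * s) / 2 := by rw [hkey, hsC]; ring
      linarith [h2, h3]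
    have hLHS : -(-(s / M) * ((C ^ 2 - 1) * δ ^ 2))
          + (n:ℝ) * ((Real.exp (-s) - 1) * (∫ x, (f x - g x) ^ 2 ∂μ) / M)
        = (s * ((C ^ 2 - 1) * δ ^ 2)
            + (n:ℝ) * ((Real.exp (-s) - 1) * (∫ x, (f x - g x) ^ 2 ∂μ))) / M := by
      field_simp
    rw [hLHS]
    have hstep : (s * ((C ^ 2 - 1) * δ ^ 2)
          + (n:ℝ) * ((Real.exp (-s) - 1) * (∫ x, (f x - g x) ^ 2 ∂μ))) / M
        ≤ (-(δ ^ 2 * s) / 2) / M := by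
      apply div_le_div_of_nonneg_right hnum hM.le
    refine hstep.trans ?_
    have heq2 : (-(δ ^ 2 * s) / 2) / M = -(δ ^ 2) / (16 * B ^ 2 * C ^ 2) := by
      rw [hsdef, hMdef]
      field_simp
      ring
    rw [heq2, div_le_div_iff₀ (by positivity) (by positivity)]
    nlinarith [mul_pos hδ2 hB2, mul_pos (mul_pos hδ2 hB2) hC2pos]
  -- inclusion of the complement
  have hsubset : (A ∪ Bev)ᶜ ⊆
      {x : Fin n → X | (n : ℝ) * (empDist2 x f fbar) ^ 2 ≤ 2 * δ ^ 2 ∧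
          (C ^ 2 - 1) * δ ^ 2 ≤ (n : ℝ) * (empDist2 x f g) ^ 2} := by
    intro x hx
    rw [Set.mem_compl_iff, Set.mem_union] at hx
    push_neg at hx
    obtain ⟨hxA, hxB⟩ := hx
    rw [hAdef, Set.mem_setOf_eq, not_le] at hxA
    rw [hBdef, Set.mem_setOf_eq, not_le] at hxB
    constructor
    · rw [hemp]
      have := lt_of_mul_lt_mul_left hxA ht0.le
      linarith
    · rw [hemp]
      have hd : 0 < s / M := by positivity
      have h' : s / M * ((C ^ 2 - 1) * δ ^ 2) < s / M * ∑ i, (f (x i) - g (x i)) ^ 2 := by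
        nlinarith [hxB]
      have := lt_of_mul_lt_mul_left h' hd.le
      linarith
  -- finish
  haveI : IsProbabilityMeasure (Measure.pi fun _ : Fin n => μ) := by infer_instance
  have hmeasAB : (Measure.pi fun _ : Fin n => μ) (A ∪ Bev)
      ≤ ENNReal.ofReal (Real.exp (-(3 * δ ^ 2) / (64 * B ^ 2)))
        + ENNReal.ofReal (Real.exp (-(3 * δ ^ 2) / (16 * B ^ 2 * (3 * C ^ 2 + 1)))) :=
    le_trans (measure_union_le A Bev) (add_le_add hAbound hBbound)
  calc ENNReal.ofReal (1 - Real.exp (-(3 * δ ^ 2) / (64 * B ^ 2))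
        - Real.exp (-(3 * δ ^ 2) / (16 * B ^ 2 * (3 * C ^ 2 + 1))))
      = ENNReal.ofReal (1 - (Real.exp (-(3 * δ ^ 2) / (64 * B ^ 2))
          + Real.exp (-(3 * δ ^ 2) / (16 * B ^ 2 * (3 * C ^ 2 + 1))))) := by
        ring_nf
    _ = 1 - (ENNReal.ofReal (Real.exp (-(3 * δ ^ 2) / (64 * B ^ 2)))
          + ENNReal.ofReal (Real.exp (-(3 * δ ^ 2) / (16 * B ^ 2 * (3 * C ^ 2 + 1))))) := by
        rw [ENNReal.ofReal_sub _ (by positivity), ENNReal.ofReal_one,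
          ENNReal.ofReal_add (by positivity) (by positivity)]
    _ ≤ 1 - (Measure.pi fun _ : Fin n => μ) (A ∪ Bev) := tsub_le_tsub_left hmeasAB 1
    _ = (Measure.pi fun _ : Fin n => μ) (A ∪ Bev)ᶜ :=
        (prob_compl_eq_one_sub (hAm.union hBm)).symm
    _ ≤ _ := measure_mono hsubset

end
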